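/- Let M ≥ 1 be an integer, set Δ = 1/M, and let Q_Δ(x) = Δ·⌊x/Δ + 1/2⌋ be the uniform quantizer with step size Δ. Let U be uniformly distributed on [-1/(2M), 1/(2M)]. Then for every x ∈ [0, 1] and every integer 0 ≤ l < M with l/M ≤ x < (l+1)/M, one has P(Q_Δ(x + U) = l/M) = l + 1 − M·x and P(Q_Δ(x + U) = (l+1)/M) = M·x − l. Consequently, Q_Δ(x + U) has exactly the distribution of the M-level stochastic quantizer Q^(s)(x), which outputs l/M with probability l + 1 − M·x and (l+1)/M with probability M·x − l. -/

import Mathlib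

open MeasureTheory ProbabilityTheory

/-- The uniform quantizer with step size `Δ`: rounding to the nearest multiple of `Δ`. -/
noncomputable def uniformQuantizer (Δ x : ℝ) : ℝ := Δ * ⌊x / Δ + 1 / 2⌋

/-- The uniform probability distribution on the interval `[a, b]`. -/
noncomputable def uniformIcc (a b : ℝ) : Measure ℝ := volume[|Set.Icc a b]

/-- **Stochastic quantization = half-dithered quantization (Lemma 1).**
With `Δ = 1/M` and a uniform dither `U` on `[-1/(2M), 1/(2M)]`, for every `x ∈ [0,1]` lying in
`[l/M, (l+1)/M)`, the half-dithered quantizer `Q_Δ(x + U)` outputs `l/M` with probability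
`l + 1 − M·x` and `(l+1)/M` with probability `M·x − l`, i.e. it has exactly the distribution
of the `M`-level stochastic quantizer. -/
theorem halfDithered_eq_stochastic_quantization
    {Ω : Type*} [MeasurableSpace Ω] (P : Measure Ω) [IsProbabilityMeasure P]
    (M : ℕ) (hM : 1 ≤ M)
    (U : Ω → ℝ) (hU : Measurable U)
    (hUlaw : Measure.map U P = uniformIcc (-(1 / (2 * M))) (1 / (2 * M)))
    (x : ℝ) (hx0 : 0 ≤ x) (hx1 : x ≤ 1)
    (l : ℕ) (hlM : l < M) (hlx : (l : ℝ) / M ≤ x) (hxl : x < ((l : ℝ) + 1) / M) :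
    (P {ω | uniformQuantizer (1 / M) (x + U ω) = (l : ℝ) / M}).toReal
        = (l : ℝ) + 1 - M * x ∧
      (P {ω | uniformQuantizer (1 / M) (x + U ω) = ((l : ℝ) + 1) / M}).toReal
        = M * x - l := by
  set Mr : ℝ := (M : ℝ) with hMr
  have hM1 : (1:ℝ) ≤ Mr := Nat.one_le_cast.mpr hM
  have hMpos : (0:ℝ) < Mr := by linarith
  have hMne : Mr ≠ 0 := ne_of_gt hMpos
  have hlle : (l : ℝ) ≤ Mr * x := by
    rw [div_le_iff₀ hMpos] at hlx; linarith
  have hllt : Mr * x < (l : ℝ) + 1 := by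
    rw [lt_div_iff₀ hMpos] at hxl; linarith
  -- Step 1: identify the events as preimages of intervals under U.
  have hset : ∀ k : ℤ, {ω | uniformQuantizer (1 / Mr) (x + U ω) = (k : ℝ) / Mr}
      = U ⁻¹' Set.Ico (((k:ℝ) - Mr * x - 1/2) / Mr) (((k:ℝ) + 1/2 - Mr * x) / Mr) := by
    intro k
    ext ω
    simp only [Set.mem_setOf_eq, Set.mem_preimage, Set.mem_Ico, uniformQuantizer,
      div_div_eq_mul_div, div_one]
    rw [div_le_iff₀ hMpos, lt_div_iff₀ hMpos]
    constructor
    · intro h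
      field_simp at h
      rw [Int.cast_inj, Int.floor_eq_iff] at h
      push_cast at h
      obtain ⟨h1, h2⟩ := h
      constructor <;> nlinarith
    · rintro ⟨h1, h2⟩
      have h3 : ⌊(x + U ω) * Mr + 1/2⌋ = k := by
        rw [Int.floor_eq_iff]
        push_cast
        constructor <;> nlinarith
      rw [h3]
      ring
  -- Step 2: a formula for the probability of such preimages.
  have hIcc : MeasurableSet (Set.Icc (-(1 / (2 * Mr))) (1 / (2 * Mr))) := measurableSet_Icc
  have harith : 1 / (2 * Mr) - -(1 / (2 * Mr)) = 1 / Mr := by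
    field_simp
    norm_num
  have hvolIcc : volume (Set.Icc (-(1 / (2 * Mr))) (1 / (2 * Mr))) = ENNReal.ofReal (1 / Mr) := by
    rw [Real.volume_Icc, harith]
  have key : ∀ a b : ℝ, P (U ⁻¹' Set.Ico a b)
      = (ENNReal.ofReal (1 / Mr))⁻¹
          * volume (Set.Icc (-(1 / (2 * Mr))) (1 / (2 * Mr)) ∩ Set.Ico a b) := by
    intro a b
    rw [← Measure.map_apply hU measurableSet_Ico, hUlaw, uniformIcc,
      ProbabilityTheory.cond_apply hIcc, hvolIcc]
  have hinvpos : (0:ℝ) < 1 / Mr := one_div_pos.mpr hMpos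
  -- Rewrite the Icc endpoints as divisions by Mr.
  have hlo : -(1 / (2 * Mr)) = (-(1/2)) / Mr := by
    rw [neg_div, div_div]
  have hhi : 1 / (2 * Mr) = (1/2) / Mr := by
    rw [div_div]
  constructor
  · -- probability of output l/M
    have hc : ((l:ℝ)) / Mr = (((l:ℤ) : ℝ)) / Mr := by push_cast; ring
    rw [hc, hset ((l:ℤ)), key]
    have hinter : Set.Icc (-(1 / (2 * Mr))) (1 / (2 * Mr))
        ∩ Set.Ico ((((l:ℤ):ℝ) - Mr * x - 1/2) / Mr) ((((l:ℤ):ℝ) + 1/2 - Mr * x) / Mr)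
        = Set.Ico (-(1 / (2 * Mr))) ((((l:ℤ):ℝ) + 1/2 - Mr * x) / Mr) := by
      rw [hlo, hhi]
      push_cast
      ext u
      simp only [Set.mem_inter_iff, Set.mem_Icc, Set.mem_Ico,
        div_le_iff₀ hMpos, le_div_iff₀ hMpos, lt_div_iff₀ hMpos]
      constructor
      · rintro ⟨⟨h1, h2⟩, h3, h4⟩; exact ⟨h1, h4⟩
      · rintro ⟨h1, h2⟩; exact ⟨⟨h1, by linarith⟩, by linarith, h2⟩
    rw [hinter, Real.volume_Ico,
      ← ENNReal.ofReal_inv_of_pos hinvpos,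
      ← ENNReal.ofReal_mul (inv_nonneg.mpr hinvpos.le)]
    have hval : (1 / Mr)⁻¹ * (((((l:ℤ):ℝ) + 1/2 - Mr * x) / Mr) - -(1 / (2 * Mr)))
        = (l : ℝ) + 1 - Mr * x := by
      push_cast
      field_simp
      ring
    rw [hval, ENNReal.toReal_ofReal (by linarith)]
  · -- probability of output (l+1)/M
    have hc : ((l:ℝ) + 1) / Mr = ((((l:ℤ) + 1 : ℤ)) : ℝ) / Mr := by push_cast; ring
    rw [hc, hset ((l:ℤ) + 1), key]
    have hinter : Set.Icc (-(1 / (2 * Mr))) (1 / (2 * Mr))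
        ∩ Set.Ico (((((l:ℤ) + 1 : ℤ):ℝ) - Mr * x - 1/2) / Mr)
            (((((l:ℤ) + 1 : ℤ):ℝ) + 1/2 - Mr * x) / Mr)
        = Set.Icc (((((l:ℤ) + 1 : ℤ):ℝ) - Mr * x - 1/2) / Mr) (1 / (2 * Mr)) := by
      rw [hlo, hhi]
      push_cast
      ext u
      simp only [Set.mem_inter_iff, Set.mem_Icc, Set.mem_Ico,
        div_le_iff₀ hMpos, le_div_iff₀ hMpos, lt_div_iff₀ hMpos]
      constructor
      · rintro ⟨⟨h1, h2⟩, h3, h4⟩; exact ⟨h3, h2⟩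
      · rintro ⟨h1, h2⟩; exact ⟨⟨by linarith, h2⟩, h1, by linarith⟩
    rw [hinter, Real.volume_Icc,
      ← ENNReal.ofReal_inv_of_pos hinvpos,
      ← ENNReal.ofReal_mul (inv_nonneg.mpr hinvpos.le)]
    have hval : (1 / Mr)⁻¹ * ((1 / (2 * Mr)) - (((((l:ℤ) + 1 : ℤ):ℝ) - Mr * x - 1/2) / Mr))
        = Mr * x - (l : ℝ) := by
      push_cast
      field_simp
      ring
    rw [hval, ENNReal.toReal_ofReal (by linarith)]
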